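/- For every nonnegative integer n, the bipartition numbers satisfy the congruences p₂(5n+2) ≡ 0 (mod 5), p₂(5n+3) ≡ 0 (mod 5), and p₂(5n+4) ≡ 0 (mod 5). -/

import Mathlib

/-- The bipartition number `p₂(n)`: the number of ordered pairs `(λ, μ)` of partitions
with `|λ| + |μ| = n`. -/
noncomputable def bipartitionNumber (n : ℕ) : ℕ :=
  Nat.card {x : (Σ a : ℕ, Nat.Partition a) × (Σ b : ℕ, Nat.Partition b) // x.1.1 + x.2.1 = n}

open PowerSeries Finset
open scoped Classical

noncomputable section Bip

instance fact5 : Fact (Nat.Prime 5) := ⟨by norm_num⟩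

local notation "K" => ZMod 5

/-- indicator series -/
def indicatorSeries (α : Type*) [Semiring α] (s : Set ℕ) : PowerSeries α :=
  PowerSeries.mk fun n => if n ∈ s then 1 else 0

theorem coeff_indicator (s : Set ℕ) {α : Type*} [Semiring α] (n : ℕ) :
    coeff n (indicatorSeries α s) = if n ∈ s then 1 else 0 :=
  coeff_mk _ _

theorem constantCoeff_indicator (s : Set ℕ) {α : Type*} [Semiring α] :
    constantCoeff (indicatorSeries α s) = if 0 ∈ s then 1 else 0 :=
  rfl

theorem num_series' {α : Type*} [Field α] (i : ℕ) :
    (1 - (X : PowerSeries α) ^ (i + 1))⁻¹ = indicatorSeries α {k | i + 1 ∣ k} := by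
  rw [PowerSeries.inv_eq_iff_mul_eq_one]
  · ext n
    cases n with
    | zero => simp [mul_sub, zero_pow, constantCoeff_indicator]
    | succ n =>
      simp only [coeff_one, if_false, mul_sub, mul_one, coeff_indicator,
        LinearMap.map_sub, reduceCtorEq]
      simp_rw [coeff_mul, coeff_X_pow, coeff_indicator, @boole_mul _ _ _ _]
      erw [@sum_ite _ _ _ _ _ (fun _ => Classical.propDecidable _), sum_ite]
      simp_rw [@filter_filter _ _ _ _ _, sum_const_zero, add_zero, sum_const, nsmul_eq_mul, mul_one,
        sub_eq_iff_eq_add, zero_add]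
      symm
      split_ifs with h
      · suffices #{a ∈ antidiagonal (n + 1) | i + 1 ∣ a.fst ∧ a.snd = i + 1} = 1 by
          simp only [Set.mem_setOf_eq]; convert congr_arg ((↑) : ℕ → α) this; norm_cast
        rw [card_eq_one]
        cases' h with p hp
        refine ⟨((i + 1) * (p - 1), i + 1), ?_⟩
        ext ⟨a₁, a₂⟩
        simp only [mem_filter, Prod.mk.injEq, HasAntidiagonal.mem_antidiagonal, mem_singleton]
        constructor
        · rintro ⟨a_left, ⟨a, rfl⟩, rfl⟩
          refine ⟨?_, rfl⟩
          rw [Nat.mul_sub_left_distrib, ← hp, ← a_left, mul_one, Nat.add_sub_cancel]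
        · rintro ⟨rfl, rfl⟩
          match p with
          | 0 => rw [mul_zero] at hp; cases hp
          | p + 1 => rw [hp]; simp [mul_add]
      · suffices #{a ∈ antidiagonal (n + 1) | i + 1 ∣ a.fst ∧ a.snd = i + 1} = 0 by
          simp only [Set.mem_setOf_eq]; convert congr_arg ((↑) : ℕ → α) this; norm_cast
        rw [card_eq_zero]
        apply eq_empty_of_forall_notMem
        simp only [Prod.forall, mem_filter, not_and, HasAntidiagonal.mem_antidiagonal]
        rintro _ h₁ h₂ ⟨a, rfl⟩ rfl
        apply h
        simp [← h₂]
  · simp [zero_pow]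

theorem partialGF_prop (α : Type*) [CommSemiring α] (n : ℕ) (s : Finset ℕ) (hs : ∀ i ∈ s, 0 < i)
    (c : ℕ → Set ℕ) (hc : ∀ i, i ∉ s → 0 ∈ c i) :
    #{p : n.Partition | (∀ j, p.parts.count j ∈ c j) ∧ ∀ j ∈ p.parts, j ∈ s} =
      coeff n (∏ i ∈ s, indicatorSeries α ((· * i) '' c i)) := by
  simp_rw [coeff_prod, coeff_indicator, prod_boole, sum_boole]
  apply congr_arg
  simp only [mem_univ, forall_true_left, not_and, not_forall, exists_prop,
    Set.mem_image, not_exists]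
  set φ : (a : Nat.Partition n) →
    a ∈ filter (fun p ↦ (∀ (j : ℕ), Multiset.count j p.parts ∈ c j) ∧ ∀ j ∈ p.parts, j ∈ s) univ →
    ℕ →₀ ℕ := fun p _ => {
      toFun := fun i => Multiset.count i p.parts • i
      support := Finset.filter (fun i => i ≠ 0) p.parts.toFinset
      mem_support_toFun := fun a => by
        simp only [smul_eq_mul, ne_eq, mul_eq_zero, Multiset.count_eq_zero]
        rw [not_or, not_not]
        simp only [Multiset.mem_toFinset, not_not, mem_filter] }
  refine Finset.card_bij φ ?_ ?_ ?_
  · intro a ha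
    simp only [φ, not_forall, not_exists, not_and, exists_prop, mem_filter]
    rw [mem_finsuppAntidiag]
    dsimp only [ne_eq, smul_eq_mul, id_eq, eq_mpr_eq_cast, le_eq_subset, Finsupp.coe_mk]
    simp only [mem_univ, forall_true_left, not_and, not_forall, exists_prop,
      mem_filter, true_and] at ha
    refine ⟨⟨?_, fun i ↦ ?_⟩, fun i _ ↦ ⟨a.parts.count i, ha.1 i, rfl⟩⟩
    · conv_rhs => simp [← a.parts_sum]
      rw [sum_multiset_count_of_subset _ s]
      · simp only [smul_eq_mul]
      · intro i
        simp only [Multiset.mem_toFinset, not_not, mem_filter]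
        apply ha.2
    · simp only [ne_eq, Multiset.mem_toFinset, not_not, mem_filter, and_imp]
      exact fun hi _ ↦ ha.2 i hi
  · intro p₁ hp₁ p₂ hp₂ h
    apply Nat.Partition.ext
    simp only [true_and, mem_univ, mem_filter] at hp₁ hp₂
    ext i
    simp only [φ, ne_eq, Multiset.mem_toFinset, not_not, smul_eq_mul, Finsupp.mk.injEq] at h
    by_cases hi : i = 0
    · rw [hi]
      rw [Multiset.count_eq_zero_of_notMem]
      · rw [Multiset.count_eq_zero_of_notMem]
        intro a; exact Nat.lt_irrefl 0 (hs 0 (hp₂.2 0 a))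
      intro a; exact Nat.lt_irrefl 0 (hs 0 (hp₁.2 0 a))
    · rw [← mul_left_inj' hi]
      rw [funext_iff] at h
      exact h.2 i
  · simp only [φ, mem_filter, mem_finsuppAntidiag, mem_univ, exists_prop, true_and, and_assoc]
    rintro f ⟨hf, hf₃, hf₄⟩
    have hf' : f ∈ finsuppAntidiag s n := mem_finsuppAntidiag.mpr ⟨hf, hf₃⟩
    simp only [mem_finsuppAntidiag] at hf'
    refine ⟨⟨∑ i ∈ s, Multiset.replicate (f i / i) i, ?_, ?_⟩, ?_, ?_, ?_⟩
    · intro i hi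
      simp only [exists_prop, Multiset.mem_sum, mem_map, Function.Embedding.coeFn_mk] at hi
      rcases hi with ⟨t, ht, z⟩
      apply hs
      rwa [Multiset.eq_of_mem_replicate z]
    · simp_rw [Multiset.sum_sum, Multiset.sum_replicate, Nat.nsmul_eq_mul]
      rw [← hf'.1]
      refine sum_congr rfl fun i hi => Nat.div_mul_cancel ?_
      rcases hf₄ i hi with ⟨w, _, hw₂⟩
      rw [← hw₂]
      exact dvd_mul_left _ _
    · intro i
      simp_rw [Multiset.count_sum', Multiset.count_replicate, sum_ite_eq']
      split_ifs with h
      · rcases hf₄ i h with ⟨w, hw₁, hw₂⟩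
        rwa [← hw₂, Nat.mul_div_cancel _ (hs i h)]
      · exact hc _ h
    · intro i hi
      rw [Multiset.mem_sum] at hi
      rcases hi with ⟨j, hj₁, hj₂⟩
      rwa [Multiset.eq_of_mem_replicate hj₂]
    · ext i
      simp_rw [Multiset.count_sum', Multiset.count_replicate, sum_ite_eq']
      simp only [ne_eq, Multiset.mem_toFinset, not_not, smul_eq_mul, ite_mul,
        zero_mul, Finsupp.coe_mk]
      split_ifs with h
      · apply Nat.div_mul_cancel
        rcases hf₄ i h with ⟨w, _, hw₂⟩
        apply Dvd.intro_left _ hw₂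
      · apply symm
        rw [← Finsupp.notMem_support_iff]
        exact notMem_mono hf'.2 h

end Bip

section Bip2
open PowerSeries Finset
open scoped Classical
noncomputable section

/-- number of partitions of n -/
def pp (n : ℕ) : ℕ := Fintype.card (Nat.Partition n)

/-- partial Euler product -/
def phi (α : Type*) [CommRing α] (N : ℕ) : PowerSeries α :=
  ∏ i ∈ Finset.range N, (1 - (X : PowerSeries α) ^ (i + 1))

/-- partition number power series -/
def PF (α : Type*) [CommRing α] : PowerSeries α := PowerSeries.mk fun n => (pp n : α)

theorem pp_eq_coeff {α : Type*} [Field α] (n m : ℕ) (h : n ≤ m) :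
    (pp n : α) = coeff n (∏ i ∈ Finset.range m, (1 - (X : PowerSeries α) ^ (i + 1))⁻¹) := by
  have := partialGF_prop α n ((range m).map ⟨Nat.succ, Nat.succ_injective⟩)
    (by simp only [mem_map]; rintro i ⟨a, -, rfl⟩; exact Nat.succ_pos a)
    (fun _ => Set.univ) (fun _ _ => trivial)
  rw [Finset.prod_map] at this
  have e1 : pp n = #(Finset.filter
      (fun p : Nat.Partition n =>
        (∀ j : ℕ, Multiset.count j p.parts ∈ (fun _ => Set.univ : ℕ → Set ℕ) j) ∧
          ∀ j ∈ p.parts, j ∈ (Finset.range m).map ⟨Nat.succ, Nat.succ_injective⟩)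
      Finset.univ) := by
    rw [pp, Fintype.card]
    congr 1
    ext p
    simp only [mem_filter, mem_univ, true_and, Set.mem_univ, forall_const, true_and, mem_map,
      Function.Embedding.coeFn_mk, mem_range]
    constructor
    · intro _
      intro j hj
      have hj' : j ≤ n := by
        simpa [p.parts_sum] using Multiset.single_le_sum (fun _ _ => Nat.zero_le _) _ hj
      have hj0 : 0 < j := p.parts_pos hj
      exact ⟨j - 1, by omega, by omega⟩
    · intro _; trivial
  rw [e1, this]
  apply congr_arg
  apply Finset.prod_congr rfl
  intro x _
  rw [num_series']
  ext k
  rw [coeff_indicator, coeff_indicator]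
  have : ((fun a => a * Nat.succ x) '' Set.univ : Set ℕ) = {k | x + 1 ∣ k} := by
    ext j
    simp only [Set.mem_image, Set.mem_univ, true_and, Set.mem_setOf_eq]
    constructor
    · rintro ⟨a, rfl⟩
      exact Dvd.intro_left a rfl
    · rintro ⟨a, rfl⟩
      exact ⟨a, mul_comm _ _⟩
  simp only [Function.Embedding.coeFn_mk]
  rw [this]

/-- truncated multiplication congruence -/
theorem coeff_mul_congr {α : Type*} [CommRing α] {A A' : PowerSeries α} {m : ℕ}
    (h : ∀ i ≤ m, coeff i A = coeff i A') (B : PowerSeries α) :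
    ∀ i ≤ m, coeff i (A * B) = coeff i (A' * B) := by
  intro i hi
  rw [coeff_mul, coeff_mul]
  apply Finset.sum_congr rfl
  rintro ⟨a, b⟩ hab
  rw [Finset.HasAntidiagonal.mem_antidiagonal] at hab
  rw [h a (le_trans (by omega) hi)]

theorem PF_mul_phi {α : Type*} [Field α] (N : ℕ) :
    ∀ i ≤ N, coeff i (PF α * phi α N) = if i = 0 then 1 else 0 := by
  intro i hi
  have h1 : ∀ t ≤ i, coeff t (PF α) =
      coeff t (∏ j ∈ Finset.range N, (1 - (X : PowerSeries α) ^ (j + 1))⁻¹) := by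
    intro t ht
    rw [PF, coeff_mk, pp_eq_coeff t N (le_trans ht hi)]
  have h2 := coeff_mul_congr h1 (phi α N) i le_rfl
  rw [h2, phi, ← Finset.prod_mul_distrib]
  have h3 : ∏ j ∈ Finset.range N,
      ((1 - (X : PowerSeries α) ^ (j + 1))⁻¹ * (1 - (X : PowerSeries α) ^ (j + 1))) = 1 := by
    apply Finset.prod_eq_one
    intro j _
    rw [mul_comm]
    apply PowerSeries.mul_inv_cancel
    simp [zero_pow]
  rw [h3, coeff_one]

end
end Bip2

section Bip3
open PowerSeries Finset
open scoped Classical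
noncomputable section

variable {α : Type*} [CommRing α]

/-- Gaussian binomial coefficient as a power series -/
def qb (α : Type*) [CommRing α] : ℕ → ℕ → PowerSeries α
  | 0, 0 => 1
  | 0, _ + 1 => 0
  | m + 1, 0 => qb α m 0
  | m + 1, j + 1 => qb α m (j + 1) + X ^ (m - j) * qb α m j

@[simp] theorem qb_zero_right (m : ℕ) : qb α m 0 = 1 := by
  induction m with
  | zero => rfl
  | succ m ih => rw [qb, ih]

theorem qb_eq_zero {m j : ℕ} (h : m < j) : qb α m j = 0 := by
  induction m generalizing j with
  | zero => match j, h with | j + 1, _ => rfl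
  | succ m ih =>
    match j, h with
    | j + 1, h =>
      rw [qb, ih (by omega), ih (by omega), mul_zero, add_zero]

@[simp] theorem qb_diag (m : ℕ) : qb α m m = 1 := by
  induction m with
  | zero => rfl
  | succ m ih => rw [qb, qb_eq_zero (by omega), ih, zero_add, Nat.sub_self, pow_zero, one_mul]

theorem qb_one (m : ℕ) : qb α m 1 = ∑ i ∈ range m, (X : PowerSeries α) ^ i := by
  induction m with
  | zero => rw [range_zero, sum_empty]; rfl
  | succ m ih =>
    rw [show qb α (m + 1) 1 = qb α m (0 + 1) + X ^ (m - 0) * qb α m 0 from rfl, ih,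
      sum_range_succ, qb_zero_right, mul_one, Nat.sub_zero]

/-- second Pascal identity -/
theorem qb_pascal2 (m j : ℕ) :
    qb α (m + 1) (j + 1) = X ^ (j + 1) * qb α m (j + 1) + qb α m j := by
  induction m generalizing j with
  | zero =>
    match j with
    | 0 => rw [qb_diag, qb_eq_zero (by omega), qb_zero_right, mul_zero, zero_add]
    | j + 1 =>
      rw [qb_eq_zero (show 1 < j + 1 + 1 by omega), qb_eq_zero (show 0 < j + 1 + 1 by omega),
        qb_eq_zero (show 0 < j + 1 by omega), mul_zero, add_zero]
  | succ m ih =>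
    match j with
    | 0 =>
      have u1 : qb α (m + 1 + 1) (0 + 1)
          = qb α (m + 1) (0 + 1) + X ^ (m + 1 - 0) * qb α (m + 1) 0 := by
        conv_lhs => rw [qb]
      rw [u1, qb_zero_right, mul_one, Nat.sub_zero]
      simp only [zero_add]
      rw [qb_one]
      have gs := geom_sum_mul (X : PowerSeries α) (m + 1)
      linear_combination - gs
    | j + 1 =>
      have u1 : qb α (m + 1 + 1) (j + 1 + 1)
          = qb α (m + 1) (j + 1 + 1) + X ^ (m + 1 - (j + 1)) * qb α (m + 1) (j + 1) := by
        conv_lhs => rw [qb]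
      rw [show m + 1 - (j + 1) = m - j from by omega] at u1
      have u2 : qb α (m + 1) (j + 1 + 1)
          = qb α m (j + 1 + 1) + X ^ (m - (j + 1)) * qb α m (j + 1) := by
        conv_lhs => rw [qb]
      have u3 : qb α (m + 1) (j + 1) = qb α m (j + 1) + X ^ (m - j) * qb α m j := by
        conv_lhs => rw [qb]
      have z : qb α m (j + 1) * (X ^ (m - j) * X ^ (j + 1))
          = qb α m (j + 1) * ((X : PowerSeries α) ^ (j + 1 + 1) * X ^ (m - (j + 1))) := by
        by_cases hjm : j + 1 ≤ m
        · congr 1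
          rw [← pow_add, ← pow_add]
          congr 1
          omega
        · rw [qb_eq_zero (show m < j + 1 by omega), zero_mul, zero_mul]
      linear_combination u1 + ih (j + 1) + X ^ (m - j) * ih j
        - X ^ (j + 1 + 1) * u2 - u3 + z

@[simp] theorem phi_zero : phi α 0 = 1 := by rw [phi, range_zero, prod_empty]

theorem phi_succ (N : ℕ) : phi α (N + 1) = phi α N * (1 - X ^ (N + 1)) :=
  Finset.prod_range_succ _ _

/-- the key product formula for Gaussian binomials -/
theorem qb_phi : ∀ n a b : ℕ, a + b = n → qb α (a + b) a * phi α a * phi α b = phi α (a + b) := by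
  intro n
  induction n with
  | zero =>
    intro a b h
    obtain ⟨rfl, rfl⟩ : a = 0 ∧ b = 0 := by omega
    simp
  | succ n ih =>
    intro a b h
    match a, b with
    | 0, b => simp
    | a + 1, 0 => simp
    | a + 1, b + 1 =>
      have hs : a + 1 + (b + 1) = a + b + 1 + 1 := by omega
      rw [hs]
      have key : qb α (a + b + 1 + 1) (a + 1)
          = qb α (a + b + 1) (a + 1) + X ^ (a + b + 1 - a) * qb α (a + b + 1) a := by
        conv_lhs => rw [qb]
      have hba : a + b + 1 - a = b + 1 := by omega
      rw [hba] at key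
      have ih1 := ih (a + 1) b (by omega)
      have ih2 := ih a (b + 1) (by omega)
      rw [show a + 1 + b = a + b + 1 by omega] at ih1
      rw [show a + (b + 1) = a + b + 1 by omega] at ih2
      rw [phi_succ a] at ih1
      rw [phi_succ b] at ih2
      rw [key, phi_succ (a + b + 1), phi_succ a, phi_succ b]
      linear_combination (1 - (X : PowerSeries α) ^ (b + 1)) * ih1
        + X ^ (b + 1) * (1 - (X : PowerSeries α) ^ (a + 1)) * ih2

end
end Bip3

section Bip4
open PowerSeries Finset
open scoped Classical
noncomputable section

/-- triangular number of an integer -/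
def TT (j : ℤ) : ℕ := (j * (j + 1)).toNat / 2

theorem TT_arg_nonneg (j : ℤ) : 0 ≤ j * (j + 1) := by
  rcases le_or_gt 0 j with h | h
  · exact mul_nonneg h (by omega)
  · nlinarith

theorem TT_cast (j : ℤ) : (TT j : ℤ) * 2 = j * (j + 1) := by
  have h0 := TT_arg_nonneg j
  have he : (2 : ℤ) ∣ j * (j + 1) := (Int.even_mul_succ_self j).two_dvd
  rw [TT]
  push_cast
  rw [Int.toNat_of_nonneg h0]
  exact Int.ediv_mul_cancel he

def EE (N s : ℕ) : ℕ := TT ((s : ℤ) - N)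

theorem EE_cast (N s : ℕ) : (EE N s : ℤ) * 2 = ((s : ℤ) - N) * ((s : ℤ) - N + 1) :=
  TT_cast _

theorem EE_step1 (N s : ℕ) : EE N s + N = EE (N + 1) s + s := by
  have h1 := EE_cast N s
  have h2 := EE_cast (N + 1) s
  push_cast at h2
  have : (EE N s : ℤ) + N = (EE (N + 1) s : ℤ) + s := by nlinarith [h1, h2]
  exact_mod_cast this

theorem EE_shift1 (N t : ℕ) (h : 1 ≤ t) : EE (N + 1) t = EE N (t - 1) := by
  unfold EE
  congr 1
  push_cast
  omega

theorem EE_step2 (N t : ℕ) (h2 : 2 ≤ t) (ht : t ≤ 2 * N + 2) :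
    EE (N + 1) t + (2 * N + 2 - t) = EE N (t - 2) + (N + 1) := by
  have a := EE_cast (N + 1) t
  have b := EE_cast N (t - 2)
  have hc : ((t - 2 : ℕ) : ℤ) = (t : ℤ) - 2 := by omega
  rw [hc] at b
  push_cast at a
  have : (EE (N + 1) t : ℤ) + (2 * N + 2 - (t:ℤ)) = (EE N (t - 2) : ℤ) + (N + 1) := by
    nlinarith [a, b]
  omega

@[simp] theorem EE_self (N : ℕ) : EE N N = 0 := by
  unfold EE
  rw [sub_self]
  rfl

/-- natural triangular numbers -/
def Tn (j : ℕ) : ℕ := TT (j : ℤ)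

theorem Tn_cast (j : ℕ) : 2 * Tn j = j * (j + 1) := by
  have h := TT_cast (j : ℤ)
  have : ((2 * Tn j : ℕ) : ℤ) = ((j * (j + 1) : ℕ) : ℤ) := by push_cast [Tn]; linarith
  exact_mod_cast this

theorem EE_add (N j : ℕ) : EE N (N + j) = Tn j := by
  unfold EE Tn
  congr 1
  push_cast
  ring

theorem TT_neg (j : ℕ) : TT (-(j + 1 : ℤ)) = Tn j := by
  have a := TT_cast (-(j + 1 : ℤ))
  have b := TT_cast (j : ℤ)
  rw [Tn]
  have : (TT (-(j + 1 : ℤ)) : ℤ) * 2 = (TT (j : ℤ) : ℤ) * 2 := by rw [a, b]; ring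
  omega

theorem EE_pair (N j : ℕ) (h : j ≤ N) : EE (N + 1) (N - j) = Tn j := by
  unfold EE
  rw [show ((N - j : ℕ) : ℤ) - ((N + 1 : ℕ) : ℤ) = -((j : ℤ) + 1) by omega]
  exact TT_neg j

/-- bounds -/
theorem EE_le_bound1 {N s m : ℕ} (h : EE N s ≤ m) : s ≤ N + m := by
  by_contra h'
  push_neg at h'
  have hc := EE_cast N s
  have hj : (m : ℤ) + 1 ≤ (s : ℤ) - N := by omega
  nlinarith [hc, mul_nonneg (by linarith : (0:ℤ) ≤ (s:ℤ) - N - m - 1)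
    (by linarith : (0:ℤ) ≤ (s:ℤ) - N + m + 2), h]

theorem EE_le_bound2 {N s m : ℕ} (h : EE N s ≤ m) : N ≤ s + m + 1 := by
  by_contra h'
  push_neg at h'
  have hc := EE_cast N s
  have hj : (s : ℤ) - N ≤ -(m : ℤ) - 2 := by omega
  nlinarith [hc, mul_nonneg (by linarith : (0:ℤ) ≤ -((s:ℤ) - N) - 1 - m - 1 + 1)
    (by linarith : (0:ℤ) ≤ -((s:ℤ) - N) + m + 1), h]

theorem Tn_gt {j m : ℕ} (h : m < j) : m < Tn j := by
  have := Tn_cast j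
  nlinarith [this]

end
end Bip4

section Bip5
open PowerSeries Finset
open scoped Classical
noncomputable section

variable {α : Type*} [CommRing α]

/-- the RHS of the finite Jacobi triple product -/
def SS (α : Type*) [CommRing α] (N : ℕ) : Polynomial (PowerSeries α) :=
  ∑ s ∈ range (2 * N + 1),
    Polynomial.C ((-1 : PowerSeries α) ^ s * qb α (2 * N) s * X ^ EE N s) * Polynomial.X ^ s

theorem coeff_SS (N t : ℕ) :
    (SS α N).coeff t = (-1 : PowerSeries α) ^ t * qb α (2 * N) t * X ^ EE N t := by
  rw [SS, Polynomial.finset_sum_coeff]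
  simp only [Polynomial.coeff_C_mul, Polynomial.coeff_X_pow, mul_ite, mul_one, mul_zero]
  rw [Finset.sum_ite_eq (range (2 * N + 1)) t
    (fun s => (-1 : PowerSeries α) ^ s * qb α (2 * N) s * X ^ EE N s)]
  split_ifs with h
  · rfl
  · rw [mem_range, not_lt] at h
    rw [qb_eq_zero (show 2 * N < t by omega), mul_zero, zero_mul]

theorem jacobi_step (N : ℕ) :
    SS α (N + 2) = SS α (N + 1) *
      ((1 - Polynomial.C ((X : PowerSeries α) ^ (N + 2)) * Polynomial.X) *
        (Polynomial.C ((X : PowerSeries α) ^ (N + 1)) - Polynomial.X)) := by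
  have hM : (1 - Polynomial.C ((X : PowerSeries α) ^ (N + 2)) * Polynomial.X) *
        (Polynomial.C ((X : PowerSeries α) ^ (N + 1)) - Polynomial.X)
      = Polynomial.C ((X : PowerSeries α) ^ (N + 1))
        + Polynomial.C (-(1 + (X : PowerSeries α) ^ (2 * N + 3))) * Polynomial.X ^ 1
        + Polynomial.C ((X : PowerSeries α) ^ (N + 2)) * Polynomial.X ^ 2 := by
    have hx : (X : PowerSeries α) ^ (2 * N + 3) = X ^ (N + 2) * X ^ (N + 1) := by
      rw [← pow_add]; congr 1 <;> omega
    simp only [hx, map_mul, map_add, map_neg, map_one]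
    ring
  rw [hM]
  apply Polynomial.ext
  intro t
  rw [mul_add, mul_add, Polynomial.coeff_add, Polynomial.coeff_add,
    Polynomial.coeff_mul_C, ← mul_assoc, ← mul_assoc,
    Polynomial.coeff_mul_X_pow', Polynomial.coeff_mul_X_pow', Polynomial.coeff_mul_C,
    Polynomial.coeff_mul_C, coeff_SS]
  match t with
  | 0 =>
    simp only [if_neg (by omega : ¬ 1 ≤ 0), if_neg (by omega : ¬ 2 ≤ 0), zero_mul, add_zero]
    rw [coeff_SS, qb_zero_right, qb_zero_right]
    have f0 := EE_step1 (N + 1) 0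
    rw [show N + 1 + 1 = N + 2 from rfl] at f0
    have g0 : (X : PowerSeries α) ^ EE (N + 1) 0 * X ^ (N + 1) = X ^ EE (N + 2) 0 := by
      rw [← pow_add]; congr 1 <;> omega
    linear_combination - g0
  | 1 =>
    simp only [if_pos (le_refl 1), if_neg (by omega : ¬ 2 ≤ 1), zero_mul, add_zero,
      show (1 : ℕ) - 1 = 0 from rfl, qb_zero_right]
    rw [coeff_SS, coeff_SS, qb_zero_right]
    have p1 := qb_pascal2 (α := α) (2 * N + 3) 0
    rw [show 2 * N + 3 + 1 = 2 * (N + 2) from by omega, qb_zero_right] at p1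
    have p3 : qb α (2 * N + 2 + 1) (0 + 1)
        = qb α (2 * N + 2) (0 + 1) + X ^ (2 * N + 2 - 0) * qb α (2 * N + 2) 0 := by
      conv_lhs => rw [qb]
    rw [Nat.sub_zero, qb_zero_right, mul_one] at p3
    rw [show 2 * (N + 1) = 2 * N + 2 from by omega]
    have f1 : EE (N + 1) 1 + (N + 1) = EE (N + 2) 1 + 1 := by
      have := EE_step1 (N + 1) 1
      rw [show N + 1 + 1 = N + 2 from rfl] at this
      omega
    have f2 : EE (N + 2) 1 = EE (N + 1) 0 := EE_shift1 (N + 1) 1 (le_refl 1)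
    have g1 : (X : PowerSeries α) ^ EE (N + 1) 1 * X ^ (N + 1)
        = X ^ EE (N + 2) 1 * X ^ 1 := by
      rw [← pow_add, ← pow_add]; congr 1 <;> omega
    have g2 : (X : PowerSeries α) ^ EE (N + 1) 0 = X ^ EE (N + 2) 1 := by rw [f2]
    linear_combination (-(X : PowerSeries α) ^ EE (N + 2) 1) * p1
      - (X : PowerSeries α) ^ EE (N + 2) 1 * X ^ (0 + 1) * p3
      + qb α (2 * N + 2) 1 * g1
      + (1 + (X : PowerSeries α) ^ (2 * N + 3)) * g2
  | (j + 2) =>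
    simp only [if_pos (by omega : 1 ≤ j + 2), if_pos (by omega : 2 ≤ j + 2),
      show j + 2 - 1 = j + 1 from rfl, show j + 2 - 2 = j from rfl]
    rw [coeff_SS, coeff_SS, coeff_SS]
    rw [show 2 * (N + 1) = 2 * N + 2 from by omega]
    by_cases hj : j ≤ 2 * N + 2
    · -- main case
      have p1 := qb_pascal2 (α := α) (2 * N + 3) (j + 1)
      rw [show 2 * N + 3 + 1 = 2 * (N + 2) from by omega] at p1
      have p2 : qb α (2 * N + 2 + 1) (j + 1 + 1)
          = qb α (2 * N + 2) (j + 1 + 1) + X ^ (2 * N + 2 - (j + 1)) * qb α (2 * N + 2) (j + 1) := by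
        conv_lhs => rw [qb]
      rw [show 2 * N + 2 - (j + 1) = 2 * N + 1 - j from by omega] at p2
      have p3 : qb α (2 * N + 2 + 1) (j + 1)
          = qb α (2 * N + 2) (j + 1) + X ^ (2 * N + 2 - j) * qb α (2 * N + 2) j := by
        conv_lhs => rw [qb]
      have f1 : EE (N + 1) (j + 2) + (N + 1) = EE (N + 2) (j + 2) + (j + 2) := by
        have := EE_step1 (N + 1) (j + 2)
        rw [show N + 1 + 1 = N + 2 from rfl] at this
        omega
      have f2 : EE (N + 2) (j + 2) = EE (N + 1) (j + 1) := by
        have := EE_shift1 (N + 1) (j + 2) (by omega)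
        rw [show N + 1 + 1 = N + 2 from rfl, show j + 2 - 1 = j + 1 from rfl] at this
        exact this
      have f3 : EE (N + 2) (j + 2) + (2 * N + 2 - j) = EE (N + 1) j + (N + 2) := by
        have := EE_step2 (N + 1) (j + 2) (by omega) (by omega)
        rw [show N + 1 + 1 = N + 2 from rfl, show j + 2 - 2 = j from rfl,
          show 2 * (N + 1) + 2 - (j + 2) = 2 * N + 2 - j from by omega] at this
        omega
      have g1 : (X : PowerSeries α) ^ EE (N + 1) (j + 2) * X ^ (N + 1)
          = X ^ EE (N + 2) (j + 2) * X ^ (j + 2) := by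
        rw [← pow_add, ← pow_add]; congr 1 <;> omega
      have g2 : (X : PowerSeries α) ^ EE (N + 1) (j + 1) = X ^ EE (N + 2) (j + 2) := by rw [f2]
      have g3 : (X : PowerSeries α) ^ EE (N + 1) j * X ^ (N + 2)
          = X ^ EE (N + 2) (j + 2) * X ^ (2 * N + 2 - j) := by
        rw [← pow_add, ← pow_add]; congr 1 <;> omega
      have z1 : qb α (2 * N + 2) (j + 1) * ((X : PowerSeries α) ^ (j + 2) * X ^ (2 * N + 1 - j))
          = qb α (2 * N + 2) (j + 1) * X ^ (2 * N + 3) := by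
        by_cases hj2 : j ≤ 2 * N + 1
        · congr 1
          rw [← pow_add]; congr 1 <;> omega
        · rw [qb_eq_zero (show 2 * N + 2 < j + 1 from by omega), zero_mul, zero_mul]
      linear_combination ((-1 : PowerSeries α)) ^ j *
        ((X : PowerSeries α) ^ EE (N + 2) (j + 2) * p1
        + (X : PowerSeries α) ^ EE (N + 2) (j + 2) * X ^ (j + 2) * p2
        + (X : PowerSeries α) ^ EE (N + 2) (j + 2) * p3
        - qb α (2 * N + 2) (j + 2) * g1
        - (1 + (X : PowerSeries α) ^ (2 * N + 3)) * qb α (2 * N + 2) (j + 1) * g2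
        + (X : PowerSeries α) ^ EE (N + 2) (j + 2) * z1
        - qb α (2 * N + 2) j * g3)
    · -- all terms vanish
      rw [qb_eq_zero (show 2 * (N + 2) < j + 2 from by omega),
        qb_eq_zero (show 2 * N + 2 < j + 2 from by omega),
        qb_eq_zero (show 2 * N + 2 < j + 1 from by omega),
        qb_eq_zero (show 2 * N + 2 < j from by omega)]
      simp

theorem jacobi_poly (N : ℕ) :
    (∏ i ∈ range (N + 1), (1 - Polynomial.C ((X : PowerSeries α) ^ (i + 1)) * Polynomial.X)) *
      ((1 - Polynomial.X) *
        ∏ i ∈ range N, (Polynomial.C ((X : PowerSeries α) ^ (i + 1)) - Polynomial.X))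
    = SS α (N + 1) := by
  induction N with
  | zero =>
    have e0 : EE 1 0 = 0 := by simp [EE, TT]
    have e1 : EE 1 1 = 0 := EE_self 1
    have e2 : EE 1 2 = 1 := by simp only [EE, TT]; decide
    have q1 : qb α 2 1 = 1 + X := by
      rw [qb_one]
      rw [Finset.sum_range_succ, Finset.sum_range_succ, Finset.sum_range_zero]
      simp
    rw [SS]
    rw [show 2 * 1 + 1 = 3 from rfl]
    rw [Finset.sum_range_succ, Finset.sum_range_succ, Finset.sum_range_succ,
      Finset.sum_range_zero, Finset.prod_range_succ, Finset.prod_range_zero,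
      Finset.prod_range_zero, e0, e1, e2, q1, qb_zero_right, qb_diag]
    norm_num
    ring
  | succ n ih =>
    rw [Finset.prod_range_succ
        (fun i => 1 - Polynomial.C ((X : PowerSeries α) ^ (i + 1)) * Polynomial.X) (n + 1),
      Finset.prod_range_succ
        (fun i => Polynomial.C ((X : PowerSeries α) ^ (i + 1)) - Polynomial.X) n]
    rw [show n + 1 + 1 = n + 2 from rfl]
    rw [jacobi_step n]
    rw [← ih]
    ring

theorem phiphi (N : ℕ) : phi α (N + 1) * phi α N
    = ∑ s ∈ range (2 * N + 3),
        (-1 : PowerSeries α) ^ (N + s + 1) * (s : PowerSeries α) * qb α (2 * N + 2) s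
          * X ^ EE (N + 1) s := by
  classical
  set G : Polynomial (PowerSeries α) :=
    (∏ i ∈ range (N + 1), (1 - Polynomial.C ((X : PowerSeries α) ^ (i + 1)) * Polynomial.X)) *
      (∏ i ∈ range N, (Polynomial.C ((X : PowerSeries α) ^ (i + 1)) - Polynomial.X)) with hG
  have hfact : (1 - Polynomial.X) * G = SS α (N + 1) := by
    rw [← jacobi_poly, hG]
    ring
  have hd1 : Polynomial.derivative ((1 - Polynomial.X) * G)
      = -G + (1 - Polynomial.X) * Polynomial.derivative G := by
    rw [Polynomial.derivative_mul, Polynomial.derivative_sub, Polynomial.derivative_one,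
      Polynomial.derivative_X]
    ring
  have hder : -(G.eval 1) = (Polynomial.derivative (SS α (N + 1))).eval 1 := by
    rw [← hfact, hd1]
    simp
  have hSSder : (Polynomial.derivative (SS α (N + 1))).eval 1
      = ∑ s ∈ range (2 * N + 3),
          ((-1 : PowerSeries α) ^ s * qb α (2 * N + 2) s * X ^ EE (N + 1) s)
            * (s : PowerSeries α) := by
    rw [SS, show 2 * (N + 1) + 1 = 2 * N + 3 from by omega,
      show 2 * (N + 1) = 2 * N + 2 from by omega]
    rw [map_sum, Polynomial.eval_finset_sum]
    apply Finset.sum_congr rfl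
    intro s _
    rw [Polynomial.derivative_C_mul_X_pow]
    rw [Polynomial.eval_mul, Polynomial.eval_C, Polynomial.eval_pow, Polynomial.eval_X, one_pow,
      mul_one]
  have hGeval : G.eval 1 = phi α (N + 1) * ((-1 : PowerSeries α) ^ N * phi α N) := by
    rw [hG]
    rw [Polynomial.eval_mul, Polynomial.eval_prod, Polynomial.eval_prod]
    simp only [Polynomial.eval_sub, Polynomial.eval_one, Polynomial.eval_mul, Polynomial.eval_C,
      Polynomial.eval_X, mul_one]
    have hterm : ∀ i ∈ range N, (X : PowerSeries α) ^ (i + 1) - 1 = -1 * (1 - X ^ (i + 1)) := by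
      intro i _
      ring
    rw [Finset.prod_congr rfl hterm, Finset.prod_mul_distrib, Finset.prod_const, card_range,
      phi, phi]
  rw [hGeval] at hder
  have hsq : ((-1 : PowerSeries α) ^ N) * ((-1) ^ N) = 1 := by
    rw [← pow_add, ← two_mul, pow_mul]
    norm_num
  have hder' : phi α (N + 1) * phi α N
      = - (((-1 : PowerSeries α) ^ N) * ∑ s ∈ range (2 * N + 3),
          ((-1 : PowerSeries α) ^ s * qb α (2 * N + 2) s * X ^ EE (N + 1) s)
            * (s : PowerSeries α)) := by
    linear_combination (-(-1 : PowerSeries α) ^ N) * hder - ((-1 : PowerSeries α) ^ N) * hSSder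
      - (phi α (N + 1) * phi α N) * hsq
  rw [hder', Finset.mul_sum, ← Finset.sum_neg_distrib]
  apply Finset.sum_congr rfl
  intro s _
  ring

end
end Bip5

section Bip6
open PowerSeries Finset
open scoped Classical
noncomputable section

variable {α : Type*} [Field α]

theorem coeff_mul_one_congr {W : PowerSeries α} {m : ℕ}
    (h : ∀ i ≤ m, coeff i W = coeff i 1) (A : PowerSeries α) :
    ∀ i ≤ m, coeff i (A * W) = coeff i A := by
  intro i hi
  rw [mul_comm]
  rw [coeff_mul_congr h A i hi, one_mul]

theorem coeff_PF_phi {M : ℕ} : ∀ i ≤ M, coeff i (PF α * phi α M) = coeff i 1 := by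
  intro i hi
  rw [PF_mul_phi M i hi, coeff_one]

/-- coefficients of Gaussian binomials are partition numbers in the stable range -/
theorem coeff_qb (a b d : ℕ) (hda : d ≤ a) (hdb : d ≤ b) :
    coeff d (qb α (a + b) a) = (pp d : α) := by
  have key := qb_phi (α := α) (a + b) a b rfl
  have e1 : qb α (a + b) a * (PF α * phi α a) * (PF α * phi α b)
      = (phi α (a + b) * PF α) * PF α := by
    rw [← key]; ring
  have c1 : coeff d (qb α (a + b) a * (PF α * phi α a) * (PF α * phi α b))
      = coeff d (qb α (a + b) a) := by
    rw [coeff_mul_one_congr (fun i hi => coeff_PF_phi i (le_trans hi hdb)) _ d le_rfl]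
    rw [coeff_mul_one_congr (fun i hi => coeff_PF_phi i (le_trans hi hda)) _ d le_rfl]
  have c2 : coeff d ((phi α (a + b) * PF α) * PF α) = coeff d (PF α) := by
    have hw : ∀ i ≤ d, coeff i (phi α (a + b) * PF α) = coeff i 1 := by
      intro i hi
      rw [mul_comm]
      exact coeff_PF_phi i (le_trans hi (le_trans hda (Nat.le_add_right a b)))
    rw [mul_comm]
    exact coeff_mul_one_congr hw _ d le_rfl
  rw [← c1, e1, c2, PF, coeff_mk]

/-- the Jacobi-type convolution formula for coefficients of `phi^2` -/
theorem coeff_phiphi (m N i : ℕ) (hN : 2 * m ≤ N) (him : i ≤ m) :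
    coeff i (phi α (N + 1) * phi α N)
      = ∑ j ∈ range (m + 1), (-1 : α) ^ j * (2 * j + 1 : α) *
          (if Tn j ≤ i then (pp (i - Tn j) : α) else 0) := by
  -- the general term evaluated
  have hterm : ∀ s : ℕ, s ≤ 2 * N + 2 →
      coeff i ((-1 : PowerSeries α) ^ (N + s + 1) * (s : PowerSeries α) * qb α (2 * N + 2) s
        * X ^ EE (N + 1) s)
      = (-1 : α) ^ (N + s + 1) * (s : α) *
          (if EE (N + 1) s ≤ i then coeff (i - EE (N + 1) s) (qb α (2 * N + 2) s) else 0) := by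
    intro s _
    have e : (-1 : PowerSeries α) ^ (N + s + 1) * (s : PowerSeries α) * qb α (2 * N + 2) s
        * X ^ EE (N + 1) s
        = C ((-1 : α) ^ (N + s + 1) * (s : α)) * (qb α (2 * N + 2) s * X ^ EE (N + 1) s) := by
      rw [map_mul, map_pow, map_neg, map_one, map_natCast]
      ring
    rw [e, coeff_C_mul, coeff_mul_X_pow']
  -- the coefficient of qb in the needed range is a partition number
  have hqbc : ∀ j : ℕ, j ≤ m → ∀ d : ℕ, d ≤ m →
      coeff d (qb α (2 * N + 2) (N + 1 + j)) = (pp d : α) := by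
    intro j hj d hd
    have : 2 * N + 2 = (N + 1 + j) + (N + 1 - j) := by omega
    rw [this, coeff_qb (N + 1 + j) (N + 1 - j) d (by omega) (by omega)]
  have hqbc2 : ∀ j : ℕ, j ≤ m → ∀ d : ℕ, d ≤ m →
      coeff d (qb α (2 * N + 2) (N - j)) = (pp d : α) := by
    intro j hj d hd
    have : 2 * N + 2 = (N - j) + (N + 2 + j) := by omega
    rw [this, coeff_qb (N - j) (N + 2 + j) d (by omega) (by omega)]
  -- expand via phiphi
  rw [phiphi N, map_sum]
  set F : ℕ → α := fun s => (-1 : α) ^ (N + s + 1) * (s : α) *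
      (if EE (N + 1) s ≤ i then coeff (i - EE (N + 1) s) (qb α (2 * N + 2) s) else 0) with hF
  have hsum1 : ∑ s ∈ range (2 * N + 3),
      coeff i ((-1 : PowerSeries α) ^ (N + s + 1) * (s : PowerSeries α) * qb α (2 * N + 2) s
        * X ^ EE (N + 1) s) = ∑ s ∈ range (2 * N + 3), F s := by
    apply Finset.sum_congr rfl
    intro s hs
    rw [mem_range] at hs
    rw [hterm s (by omega), hF]
  rw [hsum1]
  have hsplit : ∑ s ∈ range (2 * N + 3), F s
      = (∑ s ∈ range (N + 1), F s) + ∑ k ∈ range (N + 2), F (N + 1 + k) := by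
    rw [show 2 * N + 3 = (N + 1) + (N + 2) from by omega, Finset.range_add,
      Finset.sum_union, Finset.sum_map]
    · simp only [addLeftEmbedding_apply]
    · rw [Finset.disjoint_left]
      intro x hx hx2
      rw [mem_range] at hx
      rw [Finset.mem_map] at hx2
      obtain ⟨k, hk, hk2⟩ := hx2
      rw [addLeftEmbedding_apply] at hk2
      omega
  rw [hsplit]
  rw [← Finset.sum_range_reflect F (N + 1)]
  rw [Finset.sum_range_succ (fun k => F (N + 1 + k)) (N + 1)]
  have hlast : F (N + 1 + (N + 1)) = 0 := by
    simp only [hF]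
    have he : EE (N + 1) (N + 1 + (N + 1)) = Tn (N + 1) := EE_add (N + 1) (N + 1)
    rw [he, if_neg (by have := Tn_gt (show i < N + 1 from by omega); omega), mul_zero]
  rw [hlast, add_zero, ← Finset.sum_add_distrib]
  have hmain : ∀ j ∈ range (N + 1), F (N + 1 - 1 - j) + F (N + 1 + j)
      = (-1 : α) ^ j * (2 * j + 1 : α) * (if Tn j ≤ i then (pp (i - Tn j) : α) else 0) := by
    intro j hj
    rw [mem_range] at hj
    have hjN : j ≤ N := by omega
    rw [show N + 1 - 1 - j = N - j from by omega]
    simp only [hF]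
    rw [EE_pair N j hjN, EE_add (N + 1) j]
    have hs1 : (-1 : α) ^ (N + (N - j) + 1) = -(-1 : α) ^ j := by
      rw [show N + (N - j) + 1 = 2 * (N - j) + (j + 1) from by omega, pow_add, pow_mul,
        neg_one_sq, one_pow, one_mul, pow_succ, mul_neg_one]
    have hs2 : (-1 : α) ^ (N + (N + 1 + j) + 1) = (-1 : α) ^ j := by
      rw [show N + (N + 1 + j) + 1 = 2 * (N + 1) + j from by omega, pow_add, pow_mul,
        neg_one_sq, one_pow, one_mul]
    rw [hs1, hs2]
    by_cases hjm : j ≤ m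
    · by_cases hti : Tn j ≤ i
      · rw [if_pos hti, if_pos hti, if_pos hti]
        rw [hqbc j hjm (i - Tn j) (by omega), hqbc2 j hjm (i - Tn j) (by omega)]
        have hcast : ((N - j : ℕ) : α) = (N : α) - (j : α) := by
          push_cast [Nat.cast_sub hjN]
          ring
        rw [hcast]
        push_cast
        ring
      · rw [if_neg hti, if_neg hti, if_neg hti]
        ring
    · have hTm : ¬ Tn j ≤ i := by
        have := Tn_gt (show m < j from by omega)
        omega
      rw [if_neg hTm, if_neg hTm, if_neg hTm]
      ring
  rw [Finset.sum_congr rfl hmain]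
  symm
  apply Finset.sum_subset
  · intro x hx
    rw [mem_range] at hx ⊢
    omega
  · intro x _ hx
    rw [mem_range] at hx
    have hTm : ¬ Tn x ≤ i := by
      have := Tn_gt (show m < x from by omega)
      omega
    rw [if_neg hTm, mul_zero]

end
end Bip6

section Bip7
open PowerSeries Finset
open scoped Classical
noncomputable section

local notation "K" => ZMod 5

instance charp5 : CharP (PowerSeries K) 5 := ⟨fun n => by
  rw [← map_natCast (C (R := K)) n]
  constructor
  · intro h
    have h2 := congrArg (constantCoeff) h
    rw [constantCoeff_C, map_zero] at h2
    exact (ZMod.natCast_eq_zero_iff n 5).mp h2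
  · intro h
    rw [(ZMod.natCast_eq_zero_iff n 5).mpr h, map_zero]⟩

/-- counting bipartitions -/
theorem bipartitionNumber_eq (n : ℕ) :
    bipartitionNumber n = ∑ ab ∈ Finset.HasAntidiagonal.antidiagonal n, pp ab.1 * pp ab.2 := by
  have E : {x : (Σ a : ℕ, Nat.Partition a) × (Σ b : ℕ, Nat.Partition b) // x.1.1 + x.2.1 = n}
      ≃ (Σ ab : (Finset.HasAntidiagonal.antidiagonal n : Finset (ℕ × ℕ)),
          Nat.Partition ab.1.1 × Nat.Partition ab.1.2) :=
    { toFun := fun x => ⟨⟨(x.1.1.1, x.1.2.1), Finset.HasAntidiagonal.mem_antidiagonal.mpr x.2⟩,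
        (x.1.1.2, x.1.2.2)⟩
      invFun := fun y => ⟨(⟨y.1.1.1, y.2.1⟩, ⟨y.1.1.2, y.2.2⟩),
        Finset.HasAntidiagonal.mem_antidiagonal.mp y.1.2⟩
      left_inv := fun x => rfl
      right_inv := fun y => rfl }
  rw [bipartitionNumber, Nat.card_congr E, Nat.card_eq_fintype_card, Fintype.card_sigma]
  rw [← Finset.sum_coe_sort (Finset.HasAntidiagonal.antidiagonal n) (fun ab => pp ab.1 * pp ab.2)]
  apply Finset.sum_congr rfl
  intro ab _
  rw [Fintype.card_prod, pp, pp]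

theorem coeff_PF2 (n : ℕ) : coeff n (PF K * PF K) = (bipartitionNumber n : K) := by
  rw [coeff_mul, bipartitionNumber_eq]
  push_cast
  apply Finset.sum_congr rfl
  intro ab _
  rw [PF, coeff_mk, coeff_mk]

/-- the 5-dilated Euler product -/
def Phi (M : ℕ) : PowerSeries K := ∏ i ∈ range M, (1 - X ^ (5 * (i + 1)))

theorem frobenius_phi (M : ℕ) : (phi K M) ^ 5 = Phi M := by
  rw [phi, Phi, ← Finset.prod_pow]
  apply Finset.prod_congr rfl
  intro i _
  rw [sub_pow_char (1 : PowerSeries K) (X ^ (i + 1)), one_pow, ← pow_mul,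
    show (i + 1) * 5 = 5 * (i + 1) from by ring]

theorem coeff_Phi_not_dvd (M : ℕ) : ∀ b : ℕ, ¬ (5 ∣ b) → coeff b (Phi M) = 0 := by
  induction M with
  | zero =>
    intro b hb
    rw [Phi, range_zero, prod_empty, coeff_one, if_neg (by omega)]
  | succ M ih =>
    intro b hb
    rw [Phi, Finset.prod_range_succ, ← Phi, mul_sub, mul_one, map_sub, ih b hb,
      coeff_mul_X_pow']
    split_ifs with h
    · rw [ih (b - 5 * (M + 1)) (by omega), zero_sub, neg_zero]
    · rw [zero_sub, neg_zero]

theorem coeff_Phi_zero (M : ℕ) : coeff 0 (Phi M) = 1 := by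
  rw [Phi, coeff_zero_eq_constantCoeff, map_prod]
  apply Finset.prod_eq_one
  intro i _
  rw [map_sub, map_one, map_pow, constantCoeff_X, zero_pow (by omega), sub_zero]

end
end Bip7

section Final
open PowerSeries Finset
open scoped Classical
noncomputable section

local notation "K" => ZMod 5

theorem key_congruence : ∀ m : ℕ, (m % 5 = 2 ∨ m % 5 = 3 ∨ m % 5 = 4) →
    (bipartitionNumber m : K) = 0 := by
  intro m
  induction m using Nat.strong_induction_on with
  | _ m IH =>
  intro hm
  set N := 2 * m with hNdef
  have w : ∀ i ≤ m, coeff i (PF K * phi K (N + 1)) = coeff i 1 := fun i hi => by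
    rw [PF_mul_phi (N + 1) i (by omega), coeff_one]
  have eA : PF K * PF K * (phi K (N + 1)) ^ 5
      = ((phi K (N + 1) * phi K (N + 1) * phi K (N + 1)) * (PF K * phi K (N + 1)))
        * (PF K * phi K (N + 1)) := by
    ring
  have A1 : coeff m (PF K * PF K * (phi K (N + 1)) ^ 5)
      = coeff m (phi K (N + 1) * phi K (N + 1) * phi K (N + 1)) := by
    rw [eA, coeff_mul_one_congr w _ m le_rfl, coeff_mul_one_congr w _ m le_rfl]
  have hphiN : ∀ i ≤ m, coeff i (phi K (N + 1)) = coeff i (phi K N) := fun i hi => by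
    rw [phi_succ, mul_sub, mul_one, map_sub, coeff_mul_X_pow', if_neg (by omega), sub_zero]
  have A2 : coeff m (phi K (N + 1) * phi K (N + 1) * phi K (N + 1))
      = coeff m ((phi K (N + 1) * phi K N) * phi K (N + 1)) := by
    have h1 : ∀ i ≤ m, coeff i (phi K (N + 1) * phi K (N + 1))
        = coeff i (phi K (N + 1) * phi K N) := by
      intro i hi
      rw [coeff_mul_congr hphiN (phi K (N + 1)) i hi,
        mul_comm (phi K N) (phi K (N + 1))]
    exact coeff_mul_congr h1 (phi K (N + 1)) m le_rfl
  have C1 : coeff m ((phi K (N + 1) * phi K N) * phi K (N + 1))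
      = ∑ j ∈ range (m + 1), (-1 : K) ^ j * (2 * j + 1 : K) * (if Tn j = m then 1 else 0) := by
    rw [coeff_mul]
    have hstep : ∀ ab ∈ Finset.HasAntidiagonal.antidiagonal m,
        coeff ab.1 (phi K (N + 1) * phi K N) * coeff ab.2 (phi K (N + 1))
        = ∑ j ∈ range (m + 1), (-1 : K) ^ j * (2 * j + 1 : K) *
            ((if Tn j ≤ ab.1 then (pp (ab.1 - Tn j) : K) else 0)
              * coeff ab.2 (phi K (N + 1))) := by
      intro ab hab
      rw [Finset.HasAntidiagonal.mem_antidiagonal] at hab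
      rw [coeff_phiphi m N ab.1 (by omega) (by omega), Finset.sum_mul]
      apply Finset.sum_congr rfl
      intro j _
      ring
    rw [Finset.sum_congr rfl hstep, Finset.sum_comm]
    apply Finset.sum_congr rfl
    intro j _
    rw [← Finset.mul_sum]
    congr 1
    have hinner : ∑ ab ∈ Finset.HasAntidiagonal.antidiagonal m,
        (if Tn j ≤ ab.1 then (pp (ab.1 - Tn j) : K) else 0) * coeff ab.2 (phi K (N + 1))
        = coeff m ((X ^ Tn j * PF K) * phi K (N + 1)) := by
      rw [coeff_mul]
      apply Finset.sum_congr rfl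
      intro ab _
      congr 1
      rw [mul_comm (X ^ Tn j) (PF K), coeff_mul_X_pow']
      split_ifs with h
      · rw [PF, coeff_mk]
      · rfl
    rw [hinner, show (X ^ Tn j * PF K) * phi K (N + 1)
        = (PF K * phi K (N + 1)) * X ^ Tn j from by ring, coeff_mul_X_pow']
    by_cases h1 : Tn j ≤ m
    · rw [if_pos h1, PF_mul_phi (N + 1) (m - Tn j) (by omega)]
      by_cases h2 : Tn j = m
      · rw [if_pos (by omega : m - Tn j = 0), if_pos h2]
      · rw [if_neg (by omega : ¬ m - Tn j = 0), if_neg h2]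
    · rw [if_neg h1, if_neg (by omega : ¬ Tn j = m)]
  have D1 : coeff m (PF K * PF K * Phi (N + 1))
      = ∑ ab ∈ Finset.HasAntidiagonal.antidiagonal m, (bipartitionNumber ab.1 : K) * coeff ab.2 (Phi (N + 1)) := by
    rw [coeff_mul]
    apply Finset.sum_congr rfl
    intro ab _
    rw [coeff_PF2]
  have main : ∑ ab ∈ Finset.HasAntidiagonal.antidiagonal m,
      (bipartitionNumber ab.1 : K) * coeff ab.2 (Phi (N + 1))
      = ∑ j ∈ range (m + 1), (-1 : K) ^ j * (2 * j + 1 : K) * (if Tn j = m then 1 else 0) := by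
    rw [← D1, show Phi (N + 1) = (phi K (N + 1)) ^ 5 from (frobenius_phi (N + 1)).symm, A1, A2,
      C1]
  have hRHS : ∑ j ∈ range (m + 1), (-1 : K) ^ j * (2 * j + 1 : K) * (if Tn j = m then 1 else 0)
      = 0 := by
    apply Finset.sum_eq_zero
    intro j _
    by_cases hT : Tn j = m
    · have h2T := Tn_cast j
      have hjm : j * (j + 1) = 2 * m := by omega
      have hj5 : ((j : K)) * ((j : K) + 1) = 2 * (m : K) := by
        have := congrArg (Nat.cast : ℕ → K) hjm
        push_cast at this
        linear_combination this
      have hmk : (m : K) = ((m % 5 : ℕ) : K) := by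
        conv_lhs => rw [← Nat.mod_add_div m 5]
        push_cast
        rw [show (5 : K) = 0 from by decide, zero_mul, add_zero]
      rcases hm with h | h | h
      · exfalso
        rw [hmk, h] at hj5
        have : ∀ x : ZMod 5, ¬ (x * (x + 1) = 2 * ((2 : ℕ) : ZMod 5)) := by decide
        exact this _ hj5
      · rw [hmk, h] at hj5
        have hz : ∀ x : ZMod 5, x * (x + 1) = 2 * ((3 : ℕ) : ZMod 5) → 2 * x + 1 = 0 := by decide
        have := hz _ hj5
        rw [if_pos hT, mul_one, show (2 * j + 1 : K) = 2 * (j : K) + 1 from by push_cast; ring,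
          this, mul_zero]
      · exfalso
        rw [hmk, h] at hj5
        have : ∀ x : ZMod 5, ¬ (x * (x + 1) = 2 * ((4 : ℕ) : ZMod 5)) := by decide
        exact this _ hj5
    · rw [if_neg hT, mul_zero]
  have hLHS : ∑ ab ∈ Finset.HasAntidiagonal.antidiagonal m,
      (bipartitionNumber ab.1 : K) * coeff ab.2 (Phi (N + 1))
      = (bipartitionNumber m : K) := by
    rw [Finset.sum_eq_single ((m, 0) : ℕ × ℕ)]
    · rw [coeff_Phi_zero, mul_one]
    · intro ab hab hne
      rw [Finset.HasAntidiagonal.mem_antidiagonal] at hab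
      have hb : ab.2 ≠ 0 := by
        intro h0
        apply hne
        have : ab.1 = m := by omega
        exact Prod.ext this h0
      by_cases h5 : 5 ∣ ab.2
      · rw [IH ab.1 (by omega) (by omega), zero_mul]
      · rw [coeff_Phi_not_dvd _ _ h5, mul_zero]
    · intro hmem
      exact absurd (Finset.HasAntidiagonal.mem_antidiagonal.mpr (by simp)) hmem
  have : (bipartitionNumber m : K) = 0 := by rw [← hLHS, main, hRHS]
  exact this

end
end Final


section MainTheorem
open scoped Classical

/-- Ramanujan-type congruences for the bipartition number:
`p₂(5n+2) ≡ p₂(5n+3) ≡ p₂(5n+4) ≡ 0 (mod 5)`. -/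
theorem bipartitionNumber_congruences (n : ℕ) :
    bipartitionNumber (5 * n + 2) % 5 = 0 ∧
    bipartitionNumber (5 * n + 3) % 5 = 0 ∧
    bipartitionNumber (5 * n + 4) % 5 = 0 := by
  refine ⟨?_, ?_, ?_⟩
  · have h := key_congruence (5 * n + 2) (by omega)
    have h2 := (ZMod.natCast_eq_zero_iff (bipartitionNumber (5 * n + 2)) 5).mp h
    omega
  · have h := key_congruence (5 * n + 3) (by omega)
    have h2 := (ZMod.natCast_eq_zero_iff (bipartitionNumber (5 * n + 3)) 5).mp h
    omega
  · have h := key_congruence (5 * n + 4) (by omega)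
    have h2 := (ZMod.natCast_eq_zero_iff (bipartitionNumber (5 * n + 4)) 5).mp h
    omega

end MainTheorem
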